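/- Let ℓ = 4 with w_s(n) and g as follows: w_s(n) = C(n,(n−s)/2) − C(n,(n−s)/2−1) when 0 ≤ s ≤ n and s ≡ n mod 2, else 0; g(t)=t+6 if t≡0 mod 4, g(t)=t+2 if t≡2 mod 4. Define ℓ_t(n) = Σ_{i≥0} (−1)^i w_{g^i(t)}(n). Then for every even n ≥ 4, ℓ_0(n) = ℓ_2(n) = 2^{n/2 − 1}. -/
import Mathlib


/-- `w_s(n) = C(n,(n-s)/2) - C(n,(n-s)/2 - 1)` if `0 ≤ s ≤ n` and `s ≡ n (mod 2)`,
and `0` otherwise (with the convention `C(n,-1) = 0`). -/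
def wdim (s n : ℕ) : ℤ :=
  if s ≤ n ∧ (n - s) % 2 = 0 then
    (n.choose ((n - s) / 2) : ℤ) -
      (if (n - s) / 2 = 0 then 0 else (n.choose ((n - s) / 2 - 1) : ℤ))
  else 0

/-- The `g` function for `ℓ = 4`:  `g(t) = t+6` if `t ≡ 0 (mod 4)`, `t+2` if
`t ≡ 2 (mod 4)`, `t+4` if `t ≡ 1 (mod 4)`. -/
def g4 (t : ℕ) : ℕ :=
  if t % 4 = 0 then t + 6 else if t % 4 = 2 then t + 2 else t + 4

/-- `ℓ_t(n) = Σ_{i≥0} (-1)^i w_{gⁱ(t)}(n)`; the sum is finite since `w_s(n) = 0`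
for `s > n`, so it may be truncated at `i = n`. -/
def elldim (g : ℕ → ℕ) (t n : ℕ) : ℤ :=
  ∑ i ∈ Finset.range (n + 1), (-1 : ℤ) ^ i * wdim (g^[i] t) n


lemma wdim_of_gt {s n : ℕ} (h : n < s) : wdim s n = 0 := by
  simp only [wdim]; rw [if_neg]; omega

lemma wdim_eval {s n k : ℕ} (h : s ≤ n) (hk : n - s = 2 * k) :
    wdim s n = (n.choose k : ℤ) - (if k = 0 then 0 else (n.choose (k - 1) : ℤ)) := by
  simp only [wdim]
  rw [if_pos ⟨h, by omega⟩]
  have e : (n - s) / 2 = k := by omega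
  rw [e]

lemma wdim_pascal (s n : ℕ) : wdim (s + 1) (n + 1) = wdim s n + wdim (s + 2) n := by
  by_cases h : s ≤ n ∧ (n - s) % 2 = 0
  · obtain ⟨h1, h2⟩ := h
    obtain ⟨k, hk⟩ : ∃ k, n - s = 2 * k := ⟨(n - s) / 2, by omega⟩
    have e1 : n + 1 - (s + 1) = 2 * k := by omega
    rw [wdim_eval (by omega) e1, wdim_eval h1 hk]
    rcases Nat.lt_or_ge k 2 with hk2 | hk2
    · interval_cases k
      · rw [wdim_of_gt (by omega)]
        simp
      · have hs2 : s + 2 ≤ n := by omega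
        rw [wdim_eval hs2 (show n - (s + 2) = 2 * 0 by omega)]
        simp [Nat.choose_one_right]
    · obtain ⟨j, rfl⟩ : ∃ j, k = j + 2 := ⟨k - 2, by omega⟩
      have hs2 : s + 2 ≤ n := by omega
      rw [wdim_eval hs2 (show n - (s + 2) = 2 * (j + 1) by omega)]
      rw [if_neg (by omega), if_neg (by omega), if_neg (by omega)]
      have e3 : j + 2 - 1 = j + 1 := rfl
      have e4 : j + 1 - 1 = j := rfl
      rw [e3, e4, Nat.choose_succ_succ' n (j + 1), Nat.choose_succ_succ' n j]
      push_cast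
      ring
  · have hneg1 : ¬ (s + 1 ≤ n + 1 ∧ (n + 1 - (s + 1)) % 2 = 0) := by omega
    have hneg2 : ¬ (s + 2 ≤ n ∧ (n - (s + 2)) % 2 = 0) := by omega
    simp only [wdim]
    rw [if_neg hneg1, if_neg h, if_neg hneg2]; ring

lemma wdim_zero_pascal (n : ℕ) : wdim 0 (n + 1) = wdim 1 n := by
  by_cases h : (n + 1) % 2 = 0
  · obtain ⟨k, hk⟩ : ∃ k, n + 1 = 2 * k := ⟨(n + 1) / 2, by omega⟩
    have hk1 : 1 ≤ k := by omega
    rw [wdim_eval (by omega) (show n + 1 - 0 = 2 * k by omega),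
        wdim_eval (by omega) (show n - 1 = 2 * (k - 1) by omega)]
    rcases Nat.lt_or_ge k 2 with hk2 | hk2
    · have : k = 1 := by omega
      subst this
      have : n = 1 := by omega
      subst this
      simp
    · obtain ⟨j, rfl⟩ : ∃ j, k = j + 2 := ⟨k - 2, by omega⟩
      have hn : n = 2 * j + 3 := by omega
      subst hn
      rw [if_neg (by omega), if_neg (by omega)]
      have e3 : j + 2 - 1 = j + 1 := rfl
      have e4 : j + 1 - 1 = j := rfl
      rw [e3, e4, Nat.choose_succ_succ' (2 * j + 3) (j + 1),
          Nat.choose_succ_succ' (2 * j + 3) j]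
      have csym : (2 * j + 3).choose (j + 2) = (2 * j + 3).choose (j + 1) := by
        have := Nat.choose_symm (show j + 2 ≤ 2 * j + 3 by omega)
        have e : 2 * j + 3 - (j + 2) = j + 1 := by omega
        rw [e] at this
        exact this.symm
      rw [csym]
      push_cast
      ring
  · simp only [wdim]
    rw [if_neg (by omega), if_neg (by omega)]

lemma g4_iter0 (i : ℕ) : g4^[i] 0 = 4 * i + 2 * (i % 2) := by
  induction i with
  | zero => simp
  | succ i ih =>
    rw [Function.iterate_succ_apply', ih, g4]
    rcases Nat.even_or_odd i with ⟨m, rfl⟩ | ⟨m, rfl⟩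
    · rw [if_pos (by omega)]; omega
    · rw [if_neg (by omega), if_pos (by omega)]; omega

lemma g4_iter1 (i : ℕ) : g4^[i] 1 = 4 * i + 1 := by
  induction i with
  | zero => simp
  | succ i ih =>
    rw [Function.iterate_succ_apply', ih, g4]
    rw [if_neg (by omega), if_neg (by omega)]; omega

lemma g4_iter2 (i : ℕ) : g4^[i] 2 = 4 * i + 2 - 2 * (i % 2) := by
  induction i with
  | zero => simp
  | succ i ih =>
    rw [Function.iterate_succ_apply', ih, g4]
    rcases Nat.even_or_odd i with ⟨m, rfl⟩ | ⟨m, rfl⟩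
    · rw [if_neg (by omega), if_pos (by omega)]; omega
    · rw [if_pos (by omega)]; omega

/-- telescoping lemma, version 1 -/
lemma alt_sum_div (c : ℕ → ℤ) (m : ℕ) :
    ∑ i ∈ Finset.range (2 * m + 1), (-1 : ℤ) ^ i * c (i / 2) = c m := by
  induction m with
  | zero => simp
  | succ m ih =>
    have e : 2 * (m + 1) + 1 = (2 * m + 1) + 1 + 1 := by ring
    rw [e, Finset.sum_range_succ, Finset.sum_range_succ, ih]
    have d1 : (2 * m + 1) / 2 = m := by omega
    have d2 : (2 * m + 1 + 1) / 2 = m + 1 := by omega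
    rw [d1, d2]
    have s1 : (-1 : ℤ) ^ (2 * m + 1) = -1 := Odd.neg_one_pow ⟨m, by ring⟩
    have s2 : (-1 : ℤ) ^ (2 * m + 1 + 1) = 1 := Even.neg_one_pow ⟨m + 1, by ring⟩
    rw [s1, s2]; ring

/-- telescoping lemma, version 2 -/
lemma alt_sum_div' (c : ℕ → ℤ) (m : ℕ) :
    ∑ i ∈ Finset.range (2 * m + 1), (-1 : ℤ) ^ i * c ((i + 1) / 2) = c 0 := by
  induction m with
  | zero => simp
  | succ m ih =>
    have e : 2 * (m + 1) + 1 = (2 * m + 1) + 1 + 1 := by ring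
    rw [e, Finset.sum_range_succ, Finset.sum_range_succ, ih]
    have d1 : (2 * m + 1 + 1) / 2 = m + 1 := by omega
    have d2 : (2 * m + 1 + 1 + 1) / 2 = m + 1 := by omega
    rw [d1, d2]
    have s1 : (-1 : ℤ) ^ (2 * m + 1) = -1 := Odd.neg_one_pow ⟨m, by ring⟩
    have s2 : (-1 : ℤ) ^ (2 * m + 1 + 1) = 1 := Even.neg_one_pow ⟨m + 1, by ring⟩
    rw [s1, s2]; ring

lemma elldim1_sum (n : ℕ) :
    elldim g4 1 n = ∑ i ∈ Finset.range (n + 1), (-1 : ℤ) ^ i * wdim (4 * i + 1) n := by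
  unfold elldim
  exact Finset.sum_congr rfl fun i _ => by rw [g4_iter1]

/-- ℓ₁(n+1) = ℓ₀(n) + ℓ₂(n). -/
lemma rec1 (n : ℕ) : elldim g4 1 (n + 1) = elldim g4 0 n + elldim g4 2 n := by
  rw [elldim1_sum]
  have step : ∀ i, (-1 : ℤ) ^ i * wdim (4 * i + 1) (n + 1)
      = (-1 : ℤ) ^ i * wdim (g4^[i] 0) n + (-1 : ℤ) ^ i * wdim (g4^[i] 2) n := by
    intro i
    rw [wdim_pascal (4 * i) n, g4_iter0, g4_iter2]
    rcases Nat.even_or_odd i with ⟨m, rfl⟩ | ⟨m, rfl⟩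
    · have e0 : 2 * ((m + m) % 2) = 0 := by omega
      rw [e0]
      have e1 : 4 * (m + m) + 2 - 0 = 4 * (m + m) + 2 := by omega
      rw [e1]; ring
    · have e0 : (2 * m + 1) % 2 = 1 := by omega
      rw [e0]
      have e1 : 4 * (2 * m + 1) + 2 - 2 * 1 = 4 * (2 * m + 1) := by omega
      rw [e1]; ring
  calc ∑ i ∈ Finset.range (n + 1 + 1), (-1 : ℤ) ^ i * wdim (4 * i + 1) (n + 1)
      = ∑ i ∈ Finset.range (n + 1 + 1),
          ((-1 : ℤ) ^ i * wdim (g4^[i] 0) n + (-1 : ℤ) ^ i * wdim (g4^[i] 2) n) :=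
        Finset.sum_congr rfl fun i _ => step i
    _ = (∑ i ∈ Finset.range (n + 1 + 1), (-1 : ℤ) ^ i * wdim (g4^[i] 0) n)
        + ∑ i ∈ Finset.range (n + 1 + 1), (-1 : ℤ) ^ i * wdim (g4^[i] 2) n :=
        Finset.sum_add_distrib
    _ = elldim g4 0 n + elldim g4 2 n := by
        unfold elldim
        rw [Finset.sum_range_succ, Finset.sum_range_succ (f := fun i => (-1 : ℤ) ^ i * wdim (g4^[i] 2) n)]
        rw [g4_iter0, g4_iter2, wdim_of_gt (by omega), wdim_of_gt (by omega)]
        ring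

/-- ℓ₂(n+1) = ℓ₁(n) for odd n. -/
lemma rec2 (n : ℕ) (hn : n % 2 = 1) : elldim g4 2 (n + 1) = elldim g4 1 n := by
  obtain ⟨m, rfl⟩ : ∃ m, n = 2 * m + 1 := ⟨n / 2, by omega⟩
  have step : ∀ i, (-1 : ℤ) ^ i * wdim (g4^[i] 2) (2 * m + 1 + 1)
      = (-1 : ℤ) ^ i * wdim (4 * i + 1) (2 * m + 1)
        + (-1 : ℤ) ^ i * wdim (8 * (i / 2) + 3) (2 * m + 1) := by
    intro i
    rw [g4_iter2]
    rcases Nat.even_or_odd i with ⟨j, rfl⟩ | ⟨j, rfl⟩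
    · have e0 : 4 * (j + j) + 2 - 2 * ((j + j) % 2) = (8 * j + 1) + 1 := by omega
      rw [e0, wdim_pascal (8 * j + 1) (2 * m + 1)]
      have e1 : 4 * (j + j) + 1 = 8 * j + 1 := by omega
      have e2 : 8 * ((j + j) / 2) + 3 = 8 * j + 3 := by omega
      rw [e1, e2]; ring
    · have e0 : 4 * (2 * j + 1) + 2 - 2 * ((2 * j + 1) % 2) = (8 * j + 3) + 1 := by omega
      rw [e0, wdim_pascal (8 * j + 3) (2 * m + 1)]
      have e1 : 4 * (2 * j + 1) + 1 = 8 * j + 5 := by omega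
      have e2 : 8 * ((2 * j + 1) / 2) + 3 = 8 * j + 3 := by omega
      rw [e1, e2]; ring
  unfold elldim
  rw [Finset.sum_congr rfl fun i _ => step i, Finset.sum_add_distrib]
  have e : 2 * m + 1 + 1 + 1 = 2 * (m + 1) + 1 := by ring
  rw [e]
  rw [alt_sum_div (fun k => wdim (8 * k + 3) (2 * m + 1)) (m + 1)]
  rw [wdim_of_gt (show 2 * m + 1 < 8 * (m + 1) + 3 by omega)]
  rw [Finset.sum_range_succ (f := fun i => (-1 : ℤ) ^ i * wdim (4 * i + 1) (2 * m + 1))]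
  rw [wdim_of_gt (show 2 * m + 1 < 4 * (2 * (m + 1)) + 1 by omega)]
  simp only [g4_iter1]
  have e2 : 2 * (m + 1) = 2 * m + 1 + 1 := by ring
  rw [e2]
  ring
/-- ℓ₀(n+1) = ℓ₁(n) for odd n. -/
lemma rec0 (n : ℕ) (hn : n % 2 = 1) : elldim g4 0 (n + 1) = elldim g4 1 n := by
  obtain ⟨m, rfl⟩ : ∃ m, n = 2 * m + 1 := ⟨n / 2, by omega⟩
  set c : ℕ → ℤ := fun k => if k = 0 then 0 else wdim (8 * k - 1) (2 * m + 1) with hc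
  have step : ∀ i, (-1 : ℤ) ^ i * wdim (g4^[i] 0) (2 * m + 1 + 1)
      = (-1 : ℤ) ^ i * wdim (4 * i + 1) (2 * m + 1)
        + (-1 : ℤ) ^ i * c ((i + 1) / 2) := by
    intro i
    rw [g4_iter0]
    rcases Nat.even_or_odd i with ⟨j, rfl⟩ | ⟨j, rfl⟩
    · rcases Nat.eq_zero_or_pos j with rfl | hj
      · simp [hc, wdim_zero_pascal]
      · have e0 : 4 * (j + j) + 2 * ((j + j) % 2) = (8 * j - 1) + 1 := by omega
        rw [e0, wdim_pascal (8 * j - 1) (2 * m + 1)]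
        have e1 : 4 * (j + j) + 1 = (8 * j - 1) + 2 := by omega
        have e2 : c ((j + j + 1) / 2) = wdim (8 * j - 1) (2 * m + 1) := by
          have : (j + j + 1) / 2 = j := by omega
          rw [hc]; simp only [this]; rw [if_neg (by omega)]
        rw [e1, e2]; ring
    · have e0 : 4 * (2 * j + 1) + 2 * ((2 * j + 1) % 2) = (8 * j + 5) + 1 := by omega
      rw [e0, wdim_pascal (8 * j + 5) (2 * m + 1)]
      have e1 : 4 * (2 * j + 1) + 1 = 8 * j + 5 := by omega
      have e2 : c ((2 * j + 1 + 1) / 2) = wdim (8 * j + 7) (2 * m + 1) := by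
        have h' : (2 * j + 1 + 1) / 2 = j + 1 := by omega
        rw [hc]; simp only [h']; rw [if_neg (by omega)]
        have : 8 * (j + 1) - 1 = 8 * j + 7 := by omega
        rw [this]
      rw [e1, e2]; ring
  unfold elldim
  rw [Finset.sum_congr rfl fun i _ => step i, Finset.sum_add_distrib]
  have e : 2 * m + 1 + 1 + 1 = 2 * (m + 1) + 1 := by ring
  rw [e, alt_sum_div' c (m + 1)]
  have hc0 : c 0 = 0 := by simp [hc]
  rw [hc0]
  rw [Finset.sum_range_succ (f := fun i => (-1 : ℤ) ^ i * wdim (4 * i + 1) (2 * m + 1))]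
  rw [wdim_of_gt (show 2 * m + 1 < 4 * (2 * (m + 1)) + 1 by omega)]
  simp only [g4_iter1]
  have e2 : 2 * (m + 1) = 2 * m + 1 + 1 := by ring
  rw [e2]
  ring

lemma elldim1_odd : ∀ k, elldim g4 1 (2 * k + 1) = 2 ^ k := by
  intro k
  induction k with
  | zero =>
    simp only [elldim, Finset.sum_range_succ, Finset.sum_range_zero]
    norm_num [g4_iter1, wdim, g4]
  | succ k ih =>
    have e : 2 * (k + 1) + 1 = (2 * k + 1 + 1) + 1 := by ring
    rw [e, rec1, rec0 _ (by omega), rec2 _ (by omega), ih]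
    ring

/-- For `ℓ = 4` and every even `n ≥ 4`, `ℓ_0(n) = ℓ_2(n) = 2^{n/2 - 1}`. -/
theorem ell_even_ising (n : ℕ) (hn : Even n) (h4 : 4 ≤ n) :
    elldim g4 0 n = 2 ^ (n / 2 - 1) ∧ elldim g4 2 n = 2 ^ (n / 2 - 1) := by
  obtain ⟨k, hk⟩ : ∃ k, n = (2 * k + 1) + 1 := ⟨(n - 2) / 2, by
    obtain ⟨m, hm⟩ := hn; omega⟩
  subst hk
  have hdiv : ((2 * k + 1) + 1) / 2 - 1 = k := by omega
  rw [hdiv, rec0 _ (by omega), rec2 _ (by omega), elldim1_odd k]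
  exact ⟨rfl, rfl⟩
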